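/- Let Θ = [0,1] and suppose a single machine with n i.i.d. observations from a distribution P on [0,1] communicates a message of expected length at most B bits, from which an estimator θ̂ of the mean θ(P) = E_P[X] is formed. Then sup_P E[(θ̂ - θ(P))²] ≥ (1/8)·2^{-2(2B+2)}. In particular, with B = (1/4)·log₂ n, the risk is at least 1/(128n). -/

import Mathlib

open MeasureTheory
open scoped ENNReal NNReal

lemma my_pi_dirac {n : ℕ} (a : Fin n → ℝ) :
    Measure.pi (fun i : Fin n => Measure.dirac (a i)) = Measure.dirac a := by
  refine Measure.pi_eq (μ := fun i : Fin n => Measure.dirac (a i)) fun s hs => ?_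
  rw [Measure.dirac_apply' _ (MeasurableSet.univ_pi hs)]
  by_cases h : ∀ i, a i ∈ s i
  · rw [Set.indicator_of_mem (by simpa [Set.mem_univ_pi] using h)]
    simp only [Measure.dirac_apply' _ (hs _)]
    rw [Finset.prod_congr rfl (fun i _ => Set.indicator_of_mem (h i) 1)]
    simp
  · push_neg at h
    obtain ⟨i, hi⟩ := h
    rw [Set.indicator_of_notMem (by simp only [Set.mem_univ_pi]; push_neg; exact ⟨i, hi⟩)]
    exact (Finset.prod_eq_zero (Finset.mem_univ i) (by simp [Measure.dirac_apply' _ (hs i), Set.indicator_of_notMem hi])).symm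

def lbToNat : List Bool → ℕ
  | [] => 1
  | b :: t => 2 * lbToNat t + b.toNat

lemma lbToNat_pos : ∀ l, 1 ≤ lbToNat l
  | [] => le_refl _
  | b :: t => by have := lbToNat_pos t; simp only [lbToNat]; omega

lemma lbToNat_lt : ∀ l : List Bool, lbToNat l < 2 ^ (l.length + 1)
  | [] => by simp [lbToNat]
  | b :: t => by
      have := lbToNat_lt t
      simp only [lbToNat, List.length_cons]
      rw [pow_succ]
      cases b <;> simp only [Bool.toNat_false, Bool.toNat_true] <;> omega

lemma lbToNat_inj : ∀ l₁ l₂ : List Bool, lbToNat l₁ = lbToNat l₂ → l₁ = l₂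
  | [], [] => fun _ => rfl
  | [], b :: t => by have := lbToNat_pos t; cases b <;> (simp only [lbToNat, Bool.toNat]; omega)
  | b :: t, [] => by have := lbToNat_pos t; cases b <;> (simp only [lbToNat, Bool.toNat]; omega)
  | b₁ :: t₁, b₂ :: t₂ => by
      intro h
      simp only [lbToNat] at h
      have hb : b₁ = b₂ := by cases b₁ <;> cases b₂ <;> simp_all [Bool.toNat] <;> omega
      have ht : t₁ = t₂ := lbToNat_inj t₁ t₂ (by cases b₁ <;> cases b₂ <;> simp_all [Bool.toNat] <;> omega)
      rw [hb, ht]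

lemma len_bound {n : ℕ} (hn : 0 < n) (B : ℝ)
    (enc : (Fin n → ℝ) → List Bool)
    (hlen : Measurable fun x => ((enc x).length : ℝ))
    (hbudget : ∀ P : Measure ℝ, IsProbabilityMeasure P → P (Set.Icc 0 1) = 1 →
      ∫ x, ((enc x).length : ℝ) ∂(Measure.pi fun _ : Fin n => P) ≤ B)
    (x : Fin n → ℝ) (hx : ∀ i, x i ∈ Set.Icc (0:ℝ) 1) :
    ((enc x).length : ℝ) ≤ B * n ^ n := by
  have hn0 : (n : ℝ≥0∞) ≠ 0 := by exact_mod_cast hn.ne'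
  have hnt : (n : ℝ≥0∞) ≠ ⊤ := ENNReal.natCast_ne_top n
  set P : Measure ℝ := ((n : ℝ≥0∞)⁻¹) • (∑ i : Fin n, Measure.dirac (x i)) with hPdef
  have hsum : ∀ s : Set ℝ, (∀ i, x i ∈ s) → P s = 1 := by
    intro s hs
    rw [hPdef]
    simp only [Measure.smul_apply, Measure.coe_finset_sum, Finset.sum_apply,
      Measure.dirac_apply_of_mem (hs _)]
    simp [ENNReal.inv_mul_cancel hn0 hnt]
  have hP1 : IsProbabilityMeasure P := ⟨hsum Set.univ fun i => Set.mem_univ _⟩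
  have hPIcc : P (Set.Icc 0 1) = 1 := hsum _ hx
  set μ := Measure.pi fun _ : Fin n => P with hμdef
  have hμ1 : IsProbabilityMeasure μ := by rw [hμdef]; infer_instance
  -- atom lower bound
  have hatom : ((n : ℝ≥0∞)⁻¹) ^ n ≤ μ {x} := by
    rw [hμdef, ← Set.univ_pi_singleton x, Measure.pi_pi]
    rw [show ((n : ℝ≥0∞)⁻¹) ^ n = ∏ _i : Fin n, (n : ℝ≥0∞)⁻¹ by
      rw [Finset.prod_const, Finset.card_univ, Fintype.card_fin]]
    refine Finset.prod_le_prod' fun i _ => ?_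
    rw [hPdef]
    simp only [Measure.smul_apply, Measure.coe_finset_sum, Finset.sum_apply, smul_eq_mul]
    refine le_trans (le_of_eq ?_) (mul_le_mul_right (Finset.single_le_sum (f := fun j => Measure.dirac (x j) {x i}) (fun _ _ => zero_le) (Finset.mem_univ i)) _)
    simp [Measure.dirac_apply_of_mem (Set.mem_singleton (x i))]
  -- boundedness of length on the support
  have hTfin : (Set.range x).Finite := Set.finite_range x
  set S : Set (Fin n → ℝ) := Set.pi Set.univ fun _ => Set.range x with hSdef
  have hSfin : S.Finite := Set.Finite.pi fun _ => hTfin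
  have hSmeas : MeasurableSet S := hSfin.measurableSet
  have hSae : ∀ᵐ y ∂μ, y ∈ S := by
    rw [ae_iff]
    have h1 : μ S = 1 := by
      rw [hμdef, hSdef, Measure.pi_pi]
      simp [hsum _ (fun i => Set.mem_range_self i)]
    have h2 : μ Sᶜ = 0 := by
      rw [measure_compl hSmeas (measure_ne_top μ S), measure_univ, h1, tsub_self]
    exact h2
  obtain ⟨C, hC⟩ : ∃ C : ℝ, ∀ y ∈ S, ((enc y).length : ℝ) ≤ C := by
    obtain ⟨C, hC⟩ := (hSfin.image fun y => ((enc y).length : ℝ)).bddAbove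
    exact ⟨C, fun y hy => hC (Set.mem_image_of_mem _ hy)⟩
  have hint : Integrable (fun y => ((enc y).length : ℝ)) μ := by
    refine ⟨hlen.aestronglyMeasurable, HasFiniteIntegral.of_bounded (C := C) ?_⟩
    filter_upwards [hSae] with y hy
    rw [Real.norm_eq_abs, abs_of_nonneg (by positivity)]
    exact hC y hy
  have hset : (μ {x}).toReal * ((enc x).length : ℝ) ≤ ∫ y, ((enc y).length : ℝ) ∂μ := by
    have h := setIntegral_le_integral (s := {x}) hint
      (Filter.Eventually.of_forall fun y => by positivity)
    have e : ∫ y in ({x} : Set (Fin n → ℝ)), ((enc y).length : ℝ) ∂μ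
        = (μ {x}).toReal * ((enc x).length : ℝ) := by
      rw [Measure.restrict_singleton, integral_smul_measure, integral_dirac, smul_eq_mul]
    rwa [e] at h
  have hI : ∫ y, ((enc y).length : ℝ) ∂μ ≤ B := hbudget P hP1 hPIcc
  have hc : ((n : ℝ)⁻¹) ^ n ≤ (μ {x}).toReal := by
    have := ENNReal.toReal_mono (measure_ne_top μ {x}) hatom
    simpa [ENNReal.toReal_pow, ENNReal.toReal_inv] using this
  have hcpos : (0 : ℝ) < ((n : ℝ)⁻¹) ^ n := by positivity
  have hkey : ((n : ℝ)⁻¹) ^ n * ((enc x).length : ℝ) ≤ B := by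
    calc ((n : ℝ)⁻¹) ^ n * ((enc x).length : ℝ)
        ≤ (μ {x}).toReal * ((enc x).length : ℝ) :=
          mul_le_mul_of_nonneg_right hc (by positivity)
      _ ≤ ∫ y, ((enc y).length : ℝ) ∂μ := hset
      _ ≤ B := hI
  have := (le_div_iff₀' hcpos).mpr hkey
  rw [div_eq_mul_inv, inv_pow, inv_inv] at this
  linarith [this]

lemma lists_finite (m : ℕ) : {l : List Bool | l.length ≤ m}.Finite := by
  refine Set.Finite.of_finite_image (f := fun l => lbToNat l) ?_ ?_
  · refine (Set.finite_Iio (2 ^ (m + 1))).subset ?_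
    rintro k ⟨l, hl, rfl⟩
    exact lt_of_lt_of_le (lbToNat_lt l) (Nat.pow_le_pow_right (by norm_num) (by simp only [Set.mem_setOf_eq] at hl; omega))
  · exact fun l₁ _ l₂ _ h => lbToNat_inj l₁ l₂ h

lemma risk_bdd {n : ℕ} (hn : 0 < n) (B : ℝ) (hB : 0 ≤ B)
    (enc : (Fin n → ℝ) → List Bool) (θhat : List Bool → ℝ)
    (hlen : Measurable fun x => ((enc x).length : ℝ))
    (hest : Measurable fun x => θhat (enc x))
    (hbudget : ∀ P : Measure ℝ, IsProbabilityMeasure P → P (Set.Icc 0 1) = 1 →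
      ∫ x, ((enc x).length : ℝ) ∂(Measure.pi fun _ : Fin n => P) ≤ B) :
    BddAbove (Set.range fun P : {P : Measure ℝ // IsProbabilityMeasure P ∧ P (Set.Icc 0 1) = 1} =>
      ∫ x, (θhat (enc x) - ∫ y, y ∂P.1) ^ 2 ∂(Measure.pi fun _ : Fin n => P.1)) := by
  set m' := ⌊B * n ^ n⌋₊ with hm'
  set L := {l : List Bool | l.length ≤ m'} with hL
  have hLfin := lists_finite m'
  obtain ⟨C, hC⟩ : ∃ C : ℝ, ∀ l ∈ L, |θhat l| ≤ C := by
    obtain ⟨C, hC⟩ := (hLfin.image fun l => |θhat l|).bddAbove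
    exact ⟨C, fun l hl => hC (Set.mem_image_of_mem _ hl)⟩
  have hC0 : 0 ≤ C := le_trans (abs_nonneg _) (hC [] (by simp [hL, hm']))
  refine ⟨(C + 1) ^ 2, ?_⟩
  rintro _ ⟨⟨P, hP1, hPIcc⟩, rfl⟩
  haveI := hP1
  show ∫ x, (θhat (enc x) - ∫ y, y ∂P) ^ 2 ∂(Measure.pi fun _ : Fin n => P) ≤ (C + 1) ^ 2
  set ν := Measure.pi fun _ : Fin n => P with hν
  haveI : IsProbabilityMeasure ν := by rw [hν]; infer_instance
  -- a.e. membership in [0,1]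
  have haeP : ∀ᵐ y ∂P, y ∈ Set.Icc (0:ℝ) 1 := by
    rw [ae_iff]
    have := measure_compl measurableSet_Icc (measure_ne_top P (Set.Icc 0 1))
    rw [hPIcc, measure_univ, tsub_self] at this
    exact this
  -- mean in [0,1]
  have hyint : Integrable (fun y : ℝ => y) P := by
    refine ⟨measurable_id.aestronglyMeasurable, HasFiniteIntegral.of_bounded (C := 1) ?_⟩
    filter_upwards [haeP] with y hy
    rw [Real.norm_eq_abs, abs_of_nonneg hy.1]; exact hy.2
  have hmean : |∫ y, y ∂P| ≤ 1 := by
    rw [abs_le]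
    constructor
    · have : (0:ℝ) ≤ ∫ y, y ∂P := integral_nonneg_of_ae (by filter_upwards [haeP] with y hy; exact hy.1)
      linarith
    · calc ∫ y, y ∂P ≤ ∫ _, (1:ℝ) ∂P := by
            refine integral_mono_ae hyint (integrable_const 1) ?_
            filter_upwards [haeP] with y hy; exact hy.2
        _ = 1 := by simp
  -- a.e. membership in the cube
  have haeν : ∀ᵐ x ∂ν, ∀ i, x i ∈ Set.Icc (0:ℝ) 1 := by
    rw [ae_iff]
    have hmeas : MeasurableSet (Set.pi Set.univ fun _ : Fin n => Set.Icc (0:ℝ) 1) :=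
      MeasurableSet.univ_pi fun _ => measurableSet_Icc
    have h1 : ν (Set.pi Set.univ fun _ : Fin n => Set.Icc (0:ℝ) 1) = 1 := by
      rw [hν, Measure.pi_pi]; simp [hPIcc]
    have h0 := measure_compl hmeas (measure_ne_top ν _)
    rw [h1, measure_univ, tsub_self] at h0
    have hset : {x : Fin n → ℝ | ¬ ∀ i, x i ∈ Set.Icc (0:ℝ) 1}
        = (Set.pi Set.univ fun _ : Fin n => Set.Icc (0:ℝ) 1)ᶜ := by
      ext x
      simp only [Set.mem_setOf_eq, Set.mem_compl_iff, Set.mem_pi, Set.mem_univ, true_implies]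
    rw [hset]
    exact h0
  -- bound on the integrand
  have hbd : ∀ᵐ x ∂ν, (θhat (enc x) - ∫ y, y ∂P) ^ 2 ≤ (C + 1) ^ 2 := by
    filter_upwards [haeν] with x hx
    have hlenx : ((enc x).length : ℝ) ≤ B * n ^ n := len_bound hn B enc hlen hbudget x hx
    have hmem : enc x ∈ L := by
      rw [hL]; exact Nat.le_floor (by exact_mod_cast hlenx)
    have h1 : |θhat (enc x)| ≤ C := hC _ hmem
    have h2 : |θhat (enc x) - ∫ y, y ∂P| ≤ C + 1 :=
      le_trans (abs_sub _ _) (by linarith)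
    calc (θhat (enc x) - ∫ y, y ∂P) ^ 2 = |θhat (enc x) - ∫ y, y ∂P| ^ 2 := (sq_abs _).symm
      _ ≤ (C + 1) ^ 2 := by
          exact pow_le_pow_left₀ (abs_nonneg _) h2 2
  by_cases hint : Integrable (fun x => (θhat (enc x) - ∫ y, y ∂P) ^ 2) ν
  · calc ∫ x, (θhat (enc x) - ∫ y, y ∂P) ^ 2 ∂ν ≤ ∫ _, ((C+1)^2 : ℝ) ∂ν :=
          integral_mono_ae hint (integrable_const _) hbd
      _ = (C + 1) ^ 2 := by simp
  · rw [integral_undef hint]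
    positivity

lemma my_pi_dirac' {n : ℕ} (θ : ℝ) :
    (Measure.pi fun _ : Fin n => Measure.dirac θ) = Measure.dirac (fun _ : Fin n => θ) :=
  my_pi_dirac (fun _ => θ)

lemma exists_bad_point {n : ℕ} (hn : 0 < n) (B : ℝ) (hB : 0 ≤ B)
    (enc : (Fin n → ℝ) → List Bool) (θhat : List Bool → ℝ)
    (hbudget : ∀ P : Measure ℝ, IsProbabilityMeasure P → P (Set.Icc 0 1) = 1 →
      ∫ x, ((enc x).length : ℝ) ∂(Measure.pi fun _ : Fin n => P) ≤ B) :
    ∃ θ : ℝ, θ ∈ Set.Icc (0:ℝ) 1 ∧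
      (1 / (4 * ((2 ^ (⌊B⌋₊ + 1) : ℕ) : ℝ))) ^ 2 ≤ (θhat (enc fun _ => θ) - θ) ^ 2 := by
  set m := ⌊B⌋₊ with hm
  set N : ℕ := 2 ^ (m + 1) with hN
  have hN0 : 0 < N := Nat.pow_pos (by norm_num)
  set Nr : ℝ := (N : ℝ) with hNr
  have hNr0 : (0:ℝ) < Nr := by rw [hNr]; exact_mod_cast hN0
  set r : ℝ := 1 / (4 * Nr) with hr
  have hr0 : 0 < r := by rw [hr]; positivity
  -- pointwise length bound at constant vectors
  have hlenθ : ∀ θ : ℝ, θ ∈ Set.Icc (0:ℝ) 1 → (enc fun _ => θ).length ≤ m := by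
    intro θ hθ
    have h := hbudget (Measure.dirac θ) (by infer_instance) (Measure.dirac_apply_of_mem hθ)
    rw [my_pi_dirac', integral_dirac] at h
    exact Nat.le_floor (by exact_mod_cast h)
  by_contra hcon
  push_neg at hcon
  set θ : Fin (2 * N + 1) → ℝ := fun i => (i : ℝ) / (2 * Nr) with hθdef
  have hθmem : ∀ i : Fin (2 * N + 1), θ i ∈ Set.Icc (0:ℝ) 1 := by
    intro i
    constructor
    · positivity
    · rw [hθdef, div_le_one (by positivity)]
      have : (i : ℕ) ≤ 2 * N := by omega
      calc ((i : ℕ) : ℝ) ≤ ((2 * N : ℕ) : ℝ) := by exact_mod_cast this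
        _ = 2 * Nr := by push_cast; ring
  have habs : ∀ i : Fin (2 * N + 1), |θhat (enc fun _ => θ i) - θ i| < r := by
    intro i
    have h := hcon (θ i) (hθmem i)
    nlinarith [sq_abs (θhat (enc fun _ => θ i) - θ i), abs_nonneg (θhat (enc fun _ => θ i) - θ i)]
  set F : Fin (2 * N + 1) → Fin N := fun i =>
    ⟨lbToNat (enc fun _ => θ i), by
      refine lt_of_lt_of_le (lbToNat_lt _) ?_
      rw [hN]
      exact Nat.pow_le_pow_right (by norm_num) (by have := hlenθ (θ i) (hθmem i); omega)⟩ with hF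
  have Finj : Function.Injective F := by
    intro i j hij
    have hl : lbToNat (enc fun _ => θ i) = lbToNat (enc fun _ => θ j) := by
      simpa [hF, Fin.mk.injEq] using hij
    have henc : enc (fun _ => θ i) = enc (fun _ => θ j) := lbToNat_inj _ _ hl
    have hg : θhat (enc fun _ => θ i) = θhat (enc fun _ => θ j) := by rw [henc]
    have htri : |θ i - θ j| < 2 * r := by
      calc |θ i - θ j| ≤ |θ i - θhat (enc fun _ => θ i)| + |θhat (enc fun _ => θ j) - θ j| := by
            rw [hg]
            exact abs_sub_le _ _ _
        _ < r + r := by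
            rw [abs_sub_comm]
            exact add_lt_add (habs i) (habs j)
        _ = 2 * r := by ring
    have hlt1 : |(i : ℝ) - (j : ℝ)| < 1 := by
      have e : (i : ℝ) - (j : ℝ) = (θ i - θ j) * (2 * Nr) := by
        rw [hθdef]
        field_simp
      rw [e, abs_mul, abs_of_pos (by positivity : (0:ℝ) < 2 * Nr)]
      calc |θ i - θ j| * (2 * Nr) < (2 * r) * (2 * Nr) :=
            mul_lt_mul_of_pos_right htri (by positivity)
        _ = 1 := by rw [hr]; field_simp; ring
    have hij' : (i : ℕ) = (j : ℕ) := by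
      obtain ⟨h1, h2⟩ := abs_lt.mp hlt1
      have ha : ((i : ℕ) : ℝ) < ((j : ℕ) : ℝ) + 1 := by linarith
      have hb : ((j : ℕ) : ℝ) < ((i : ℕ) : ℝ) + 1 := by linarith
      have ha' : (i : ℕ) < (j : ℕ) + 1 := by exact_mod_cast ha
      have hb' : (j : ℕ) < (i : ℕ) + 1 := by exact_mod_cast hb
      omega
    exact Fin.ext hij'
  have hcard := Fintype.card_le_of_injective F Finj
  simp only [Fintype.card_fin] at hcard
  omega


/-- Bounded mean estimation with one machine: if a message of expected length at most `B`
bits is sent about `n` i.i.d. observations from any distribution `P` on `[0,1]`, then the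
worst-case risk of estimating the mean is at least `(1/8)·2^{-2(2B+2)}`; in particular,
with `B = (1/4)·log₂ n`, the risk is at least `1/(128n)`. -/
theorem stmt7 {n : ℕ} (hn : 0 < n) (B : ℝ) (hB : 0 ≤ B)
    (enc : (Fin n → ℝ) → List Bool) (θhat : List Bool → ℝ)
    (hlen : Measurable fun x => ((enc x).length : ℝ))
    (hest : Measurable fun x => θhat (enc x))
    (hbudget : ∀ P : Measure ℝ, IsProbabilityMeasure P → P (Set.Icc 0 1) = 1 →
      ∫ x, ((enc x).length : ℝ) ∂(Measure.pi fun _ : Fin n => P) ≤ B) :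
    (1 / 8 : ℝ) * (2 : ℝ) ^ (-(2 * (2 * B + 2))) ≤
      (⨆ P : {P : Measure ℝ // IsProbabilityMeasure P ∧ P (Set.Icc 0 1) = 1},
        ∫ x, (θhat (enc x) - ∫ y, y ∂P.1) ^ 2 ∂(Measure.pi fun _ : Fin n => P.1)) ∧
    (B = (1 / 4) * Real.logb 2 n →
      1 / (128 * n) ≤
        ⨆ P : {P : Measure ℝ // IsProbabilityMeasure P ∧ P (Set.Icc 0 1) = 1},
          ∫ x, (θhat (enc x) - ∫ y, y ∂P.1) ^ 2 ∂(Measure.pi fun _ : Fin n => P.1)) := by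
  have hbdd := risk_bdd hn B hB enc θhat hlen hest hbudget
  obtain ⟨θ₀, hθ₀, hrisk⟩ := exists_bad_point hn B hB enc θhat hbudget
  have hd1 : IsProbabilityMeasure (Measure.dirac θ₀) := by infer_instance
  have hd2 : (Measure.dirac θ₀) (Set.Icc 0 1) = 1 := Measure.dirac_apply_of_mem hθ₀
  set P₀ : {P : Measure ℝ // IsProbabilityMeasure P ∧ P (Set.Icc 0 1) = 1} :=
    ⟨Measure.dirac θ₀, hd1, hd2⟩ with hP₀
  have hriskeq : (∫ x, (θhat (enc x) - ∫ y, y ∂P₀.1) ^ 2 ∂(Measure.pi fun _ : Fin n => P₀.1))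
      = (θhat (enc fun _ => θ₀) - θ₀) ^ 2 := by
    rw [hP₀]
    show (∫ x, (θhat (enc x) - ∫ y, y ∂(Measure.dirac θ₀)) ^ 2
        ∂(Measure.pi fun _ : Fin n => Measure.dirac θ₀)) = _
    rw [my_pi_dirac', integral_dirac, integral_dirac]
  set m := ⌊B⌋₊ with hm
  have hmB : (m : ℝ) ≤ B := Nat.floor_le hB
  -- arithmetic: (1/8) * 2^(-(2*(2B+2))) ≤ (1/(4*2^(m+1)))^2
  have harith : (1 / 8 : ℝ) * (2 : ℝ) ^ (-(2 * (2 * B + 2)))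
      ≤ (1 / (4 * ((2 ^ (m + 1) : ℕ) : ℝ))) ^ 2 := by
    have e1 : (1 / (4 * ((2 ^ (m + 1) : ℕ) : ℝ))) ^ 2 = ((2:ℝ) ^ (2 * m + 6))⁻¹ := by
      push_cast
      rw [div_pow, one_pow, mul_pow, ← pow_mul, one_div]
      congr 1
      rw [show (4:ℝ) ^ 2 = 2 ^ 4 by norm_num, ← pow_add]
      congr 1
      ring
    have e2 : ((2:ℝ) ^ (2 * m + 6))⁻¹ = (2:ℝ) ^ (-(2 * (m:ℝ) + 6)) := by
      rw [Real.rpow_neg two_pos.le,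
        show 2 * (m:ℝ) + 6 = ((2 * m + 6 : ℕ) : ℝ) by push_cast; ring,
        Real.rpow_natCast]
    have e3 : (1 / 8 : ℝ) = (2:ℝ) ^ (-3 : ℝ) := by
      rw [Real.rpow_neg two_pos.le, show (3:ℝ) = ((3:ℕ):ℝ) by norm_num, Real.rpow_natCast]
      norm_num
    rw [e1, e2, e3, ← Real.rpow_add two_pos]
    exact (Real.rpow_le_rpow_left_iff one_lt_two).mpr (by linarith)
  have hmain : (1 / 8 : ℝ) * (2 : ℝ) ^ (-(2 * (2 * B + 2))) ≤
      ⨆ P : {P : Measure ℝ // IsProbabilityMeasure P ∧ P (Set.Icc 0 1) = 1},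
        ∫ x, (θhat (enc x) - ∫ y, y ∂P.1) ^ 2 ∂(Measure.pi fun _ : Fin n => P.1) := by
    refine le_ciSup_of_le hbdd P₀ ?_
    rw [hriskeq]
    exact le_trans harith hrisk
  refine ⟨hmain, fun hBeq => ?_⟩
  have hn' : (0:ℝ) < n := by exact_mod_cast hn
  have h2 : (2:ℝ) ^ (Real.logb 2 n) = n := Real.rpow_logb two_pos (by norm_num) hn'
  have heq : (1 / 8 : ℝ) * (2 : ℝ) ^ (-(2 * (2 * B + 2))) = 1 / (128 * n) := by
    rw [hBeq, show -(2 * (2 * ((1/4) * Real.logb 2 (n:ℝ)) + 2)) = -(Real.logb 2 (n:ℝ) + 4) by ring]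
    rw [Real.rpow_neg two_pos.le, Real.rpow_add two_pos, h2,
      show (4:ℝ) = ((4:ℕ):ℝ) by norm_num, Real.rpow_natCast]
    rw [mul_inv]
    norm_num
    field_simp
    ring
  rw [← heq]
  exact hmain
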